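/- arXiv:2604.21877 — 4 statements merged into one kernel-verified Lean document; each statement's English description precedes it below -/
import Mathlib

section
/- If w_i ≤ C for all i ∈ [n], then OPT_I ≤ OPT_F ≤ 2·OPT_I, where OPT_I = min{K(x) : x ∈ {0,1}^n, c⊤x ≤ B} and OPT_F = min{F(x) : x ∈ {0,1}^n, c⊤x ≤ B}. -/
open Finset

/-- Core lemma: any fractional feasible knapsack solution (supported on `A`)
has value at most twice the integral optimum bound `K`. -/
theorem frac_le_two_int {n : ℕ} (C : ℝ) (hC : 0 ≤ C) (p w : Fin n → ℝ)
    (hp : ∀ i, 0 ≤ p i) (hw : ∀ i, 0 ≤ w i) (hwC : ∀ i, w i ≤ C)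
    (A : Finset (Fin n)) (K : ℝ) (hK0 : 0 ≤ K)
    (hfeas : ∀ S : Finset (Fin n), S ⊆ A → ∑ i ∈ S, w i ≤ C → ∑ i ∈ S, p i ≤ K)
    (y : Fin n → ℝ) (hy0 : ∀ i, 0 ≤ y i) (hy1 : ∀ i, y i ≤ 1)
    (hyA : ∀ i ∉ A, y i = 0) (hyw : ∑ i, w i * y i ≤ C) :
    ∑ i, p i * y i ≤ 2 * K := by
  classical
  set Sl : ℝ → Finset (Fin n) := fun l => A.filter (fun i => l * w i < p i) with hSl
  have hSlA : ∀ l, Sl l ⊆ A := fun l => filter_subset _ _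
  -- key threshold bound
  have key : ∀ l : ℝ, 0 ≤ l →
      ∑ i, p i * y i ≤ (∑ i ∈ Sl l, p i) + l * (C - ∑ i ∈ Sl l, w i) := by
    intro l hl
    have expand : ∑ i, p i * y i
        = ∑ i, (p i - l * w i) * y i + l * ∑ i, w i * y i := by
      rw [Finset.mul_sum, ← Finset.sum_add_distrib]
      exact Finset.sum_congr rfl (fun i _ => by ring)
    have h1 : ∑ i, (p i - l * w i) * y i ≤ ∑ i ∈ Sl l, (p i - l * w i) := by
      calc ∑ i, (p i - l * w i) * y i
          ≤ ∑ i, (if i ∈ Sl l then (p i - l * w i) else 0) := by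
            apply Finset.sum_le_sum
            intro i _
            by_cases hi : i ∈ Sl l
            · simp only [hi, if_true]
              have hnn : 0 ≤ p i - l * w i := by
                have := (mem_filter.mp hi).2
                linarith
              nlinarith [hy0 i, hy1 i]
            · simp only [hi, if_false]
              by_cases hiA : i ∈ A
              · have hle : p i ≤ l * w i := by
                  by_contra hcon
                  exact hi (mem_filter.mpr ⟨hiA, lt_of_not_ge hcon⟩)
                have := hy0 i
                nlinarith
              · rw [hyA i hiA, mul_zero]
        _ = ∑ i ∈ Sl l, (p i - l * w i) := by
            rw [Finset.sum_ite_mem, Finset.univ_inter]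
    have h2 : l * ∑ i, w i * y i ≤ l * C := mul_le_mul_of_nonneg_left hyw hl
    calc ∑ i, p i * y i
        = ∑ i, (p i - l * w i) * y i + l * ∑ i, w i * y i := expand
      _ ≤ (∑ i ∈ Sl l, (p i - l * w i)) + l * C := add_le_add h1 h2
      _ = (∑ i ∈ Sl l, p i) + l * (C - ∑ i ∈ Sl l, w i) := by
          rw [Finset.sum_sub_distrib, ← Finset.mul_sum]; ring
  -- candidate set
  set L : Finset ℝ :=
    insert 0 ((A.filter (fun i => 0 < w i)).image (fun i => p i / w i)) with hL
  have h0L : (0:ℝ) ∈ L := mem_insert_self _ _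
  have hLne : L.Nonempty := ⟨0, h0L⟩
  have hLnn : ∀ l ∈ L, 0 ≤ l := by
    intro l hl
    rcases mem_insert.mp hl with h | h
    · exact h.ge
    · obtain ⟨i, _, rfl⟩ := mem_image.mp h
      exact div_nonneg (hp i) (hw i)
  -- the max candidate works
  have hmaxG : ∑ i ∈ Sl (L.max' hLne), w i ≤ C := by
    have hz : ∀ i ∈ Sl (L.max' hLne), w i = 0 := by
      intro i hi
      have hiA := (mem_filter.mp hi).1
      have hilt := (mem_filter.mp hi).2
      by_contra hne
      have hwi : 0 < w i := lt_of_le_of_ne (hw i) (Ne.symm hne)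
      have hmem : p i / w i ∈ L := by
        apply mem_insert_of_mem
        exact mem_image.mpr ⟨i, mem_filter.mpr ⟨hiA, hwi⟩, rfl⟩
      have hle := L.le_max' _ hmem
      have : p i ≤ L.max' hLne * w i := by
        rw [div_le_iff₀ hwi] at hle; linarith [hle]
      linarith
    calc ∑ i ∈ Sl (L.max' hLne), w i = 0 := Finset.sum_eq_zero hz
      _ ≤ C := hC
  set G : Finset ℝ := L.filter (fun l => ∑ i ∈ Sl l, w i ≤ C) with hG
  have hGne : G.Nonempty := ⟨L.max' hLne, mem_filter.mpr ⟨L.max'_mem hLne, hmaxG⟩⟩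
  set ls : ℝ := G.min' hGne with hls
  have hlsL : ls ∈ L := (mem_filter.mp (G.min'_mem hGne)).1
  have hlsC : ∑ i ∈ Sl ls, w i ≤ C := (mem_filter.mp (G.min'_mem hGne)).2
  have hlsnn : 0 ≤ ls := hLnn _ hlsL
  set S : Finset (Fin n) := Sl ls with hS
  have hSA : S ⊆ A := hSlA ls
  have hpS : ∑ i ∈ S, p i ≤ K := hfeas S hSA hlsC
  rcases eq_or_lt_of_le hlsnn with hls0 | hlspos
  · -- λ* = 0
    have hz : ls * (C - ∑ i ∈ S, w i) = 0 := by rw [← hls0]; ring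
    have hkey := key ls hlsnn
    rw [hz] at hkey
    linarith
  · -- λ* > 0 : previous candidate l'
    set L' : Finset ℝ := L.filter (fun l => l < ls) with hL'
    have hL'ne : L'.Nonempty := ⟨0, mem_filter.mpr ⟨h0L, hlspos⟩⟩
    set l' : ℝ := L'.max' hL'ne with hl'
    have hl'L : l' ∈ L := (mem_filter.mp (L'.max'_mem hL'ne)).1
    have hl'lt : l' < ls := (mem_filter.mp (L'.max'_mem hL'ne)).2
    have hl'nn : 0 ≤ l' := hLnn _ hl'L
    have hl'big : C < ∑ i ∈ Sl l', w i := by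
      by_contra hcon
      push_neg at hcon
      have : l' ∈ G := mem_filter.mpr ⟨hl'L, hcon⟩
      have := G.min'_le _ this
      linarith
    set T : Finset (Fin n) := A.filter (fun i => 0 < w i ∧ p i = ls * w i) with hT
    have hSTdisj : Disjoint S T := by
      rw [Finset.disjoint_left]
      intro i hiS hiT
      have h1 := (mem_filter.mp hiS).2
      have h2 := (mem_filter.mp hiT).2.2
      rw [h2] at h1
      exact lt_irrefl _ h1
    have hsub : Sl l' ⊆ S ∪ T := by
      intro i hi
      have hiA := (mem_filter.mp hi).1
      have hilt : l' * w i < p i := (mem_filter.mp hi).2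
      by_cases hwi : 0 < w i
      · have hrL : p i / w i ∈ L :=
          mem_insert_of_mem (mem_image.mpr ⟨i, mem_filter.mpr ⟨hiA, hwi⟩, rfl⟩)
        have hr1 : l' < p i / w i := (lt_div_iff₀ hwi).mpr hilt
        have hr2 : ls ≤ p i / w i := by
          by_contra hcon
          push_neg at hcon
          have : p i / w i ∈ L' := mem_filter.mpr ⟨hrL, hcon⟩
          have := L'.le_max' _ this
          linarith
        have hr3 : ls * w i ≤ p i := (le_div_iff₀ hwi).mp hr2
        rcases lt_or_eq_of_le hr3 with h | h
        · exact mem_union_left _ (mem_filter.mpr ⟨hiA, h⟩)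
        · exact mem_union_right _ (mem_filter.mpr ⟨hiA, hwi, h.symm⟩)
      · have hwi0 : w i = 0 := le_antisymm (not_lt.mp hwi) (hw i)
        apply mem_union_left
        apply mem_filter.mpr ⟨hiA, ?_⟩
        rw [hwi0, mul_zero]
        rw [hwi0, mul_zero] at hilt
        exact hilt
    have hbigUnion : C < ∑ i ∈ S ∪ T, w i := by
      calc C < ∑ i ∈ Sl l', w i := hl'big
        _ ≤ ∑ i ∈ S ∪ T, w i :=
          Finset.sum_le_sum_of_subset_of_nonneg hsub (fun i _ _ => hw i)
    -- pick a maximal U ⊆ T with w(S ∪ U) ≤ C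
    set P : Finset (Finset (Fin n)) :=
      T.powerset.filter (fun U => ∑ i ∈ S ∪ U, w i ≤ C) with hP
    have hemptyP : (∅ : Finset (Fin n)) ∈ P := by
      apply mem_filter.mpr
      constructor
      · exact empty_mem_powerset T
      · rw [Finset.union_empty]; exact hlsC
    obtain ⟨U, hUP, hUmax⟩ := P.exists_max_image Finset.card ⟨∅, hemptyP⟩
    have hUT : U ⊆ T := mem_powerset.mp (mem_filter.mp hUP).1
    have hUC : ∑ i ∈ S ∪ U, w i ≤ C := (mem_filter.mp hUP).2
    have hUneT : U ≠ T := by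
      rintro rfl
      linarith
    obtain ⟨j, hjT, hjU⟩ := Finset.exists_of_ssubset (ssubset_of_subset_of_ne hUT hUneT)
    have hjS : j ∉ S := Finset.disjoint_right.mp hSTdisj hjT
    have hjSU : j ∉ S ∪ U := by
      simp only [mem_union, not_or]; exact ⟨hjS, hjU⟩
    have hjbig : C < ∑ i ∈ S ∪ U, w i + w j := by
      by_contra hcon
      push_neg at hcon
      have hU'P : insert j U ∈ P := by
        apply mem_filter.mpr
        constructor
        · exact mem_powerset.mpr (insert_subset hjT hUT)
        · rw [Finset.union_insert, Finset.sum_insert hjSU]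
          linarith
      have := hUmax _ hU'P
      rw [Finset.card_insert_of_notMem hjU] at this
      have hUsubU' : U ⊆ insert j U := subset_insert _ _
      have := Finset.card_le_card hUsubU'
      omega
    -- final computation
    have hSUdisj : Disjoint S U := Finset.disjoint_of_subset_right hUT hSTdisj
    have hwSU : ∑ i ∈ S ∪ U, w i = ∑ i ∈ S, w i + ∑ i ∈ U, w i :=
      Finset.sum_union hSUdisj
    have hpU : ∑ i ∈ U, p i = ls * ∑ i ∈ U, w i := by
      rw [Finset.mul_sum]
      exact Finset.sum_congr rfl (fun i hi => (mem_filter.mp (hUT hi)).2.2)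
    have hpj : p j = ls * w j := (mem_filter.mp hjT).2.2
    have hpSU : ∑ i ∈ S ∪ U, p i ≤ K :=
      hfeas _ (Finset.union_subset hSA (hUT.trans (filter_subset _ _))) hUC
    have hpjK : p j ≤ K := by
      have := hfeas {j} ?_ ?_
      · simpa using this
      · simpa using (mem_filter.mp hjT).1
      · simpa using hwC j
    have hpSUsplit : ∑ i ∈ S ∪ U, p i = ∑ i ∈ S, p i + ∑ i ∈ U, p i :=
      Finset.sum_union hSUdisj
    have hkey := key ls hlsnn
    have hCbound : ls * (C - ∑ i ∈ S, w i) ≤ ls * (∑ i ∈ U, w i + w j) := by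
      apply mul_le_mul_of_nonneg_left _ hlsnn
      rw [hwSU] at hjbig
      linarith
    calc ∑ i, p i * y i
        ≤ (∑ i ∈ S, p i) + ls * (C - ∑ i ∈ S, w i) := hkey
      _ ≤ (∑ i ∈ S, p i) + ls * (∑ i ∈ U, w i + w j) := by linarith
      _ = (∑ i ∈ S, p i) + (∑ i ∈ U, p i) + p j := by
          rw [hpU, hpj]; ring
      _ = (∑ i ∈ S ∪ U, p i) + p j := by rw [hpSUsplit]
      _ ≤ 2 * K := by linarith

/-- If w_i ≤ C for all i, then OPT_I ≤ OPT_F ≤ 2·OPT_I, where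
OPT_I = min{K(x) : c⊤x ≤ B, x ∈ {0,1}^n} and OPT_F = min{F(x) : c⊤x ≤ B, x ∈ {0,1}^n}. -/
theorem stmt4 (n : ℕ) (hn : 0 < n) (C B : ℝ) (hC : 0 ≤ C) (hB : 0 ≤ B)
    (p w c : Fin n → ℝ) (hp : ∀ i, 0 ≤ p i) (hw : ∀ i, 0 ≤ w i) (hc : ∀ i, 0 ≤ c i)
    (hwC : ∀ i, w i ≤ C)
    (K F : (Fin n → ℝ) → ℝ)
    (hK : ∀ x, (∀ i, x i = 0 ∨ x i = 1) →
      IsGreatest {v : ℝ | ∃ y : Fin n → ℝ,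
        (∀ i, y i = 0 ∨ y i = 1) ∧ (∑ i, w i * y i ≤ C) ∧
        (∀ i, y i ≤ 1 - x i) ∧ v = ∑ i, p i * y i} (K x))
    (hF : ∀ x, (∀ i, x i = 0 ∨ x i = 1) →
      IsGreatest {v : ℝ | ∃ y : Fin n → ℝ,
        (∀ i, 0 ≤ y i ∧ y i ≤ 1) ∧ (∑ i, w i * y i ≤ C) ∧
        (∀ i, y i ≤ 1 - x i) ∧ v = ∑ i, p i * y i} (F x))
    (OPTI OPTF : ℝ)
    (hI : IsLeast {v : ℝ | ∃ x : Fin n → ℝ,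
        (∀ i, x i = 0 ∨ x i = 1) ∧ (∑ i, c i * x i ≤ B) ∧ v = K x} OPTI)
    (hFo : IsLeast {v : ℝ | ∃ x : Fin n → ℝ,
        (∀ i, x i = 0 ∨ x i = 1) ∧ (∑ i, c i * x i ≤ B) ∧ v = F x} OPTF) :
    OPTI ≤ OPTF ∧ OPTF ≤ 2 * OPTI := by
  classical
  -- For a binary x, K x ≤ F x.
  have hKF : ∀ x : Fin n → ℝ, (∀ i, x i = 0 ∨ x i = 1) → K x ≤ F x := by
    intro x hx
    obtain ⟨y, hybin, hyw, hyx, hval⟩ := (hK x hx).1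
    apply (hF x hx).2
    refine ⟨y, fun i => ?_, hyw, hyx, hval⟩
    rcases hybin i with h | h <;> simp [h]
  constructor
  · -- OPTI ≤ OPTF
    obtain ⟨x, hx, hcx, hvF⟩ := hFo.1
    have h1 : OPTI ≤ K x := hI.2 ⟨x, hx, hcx, rfl⟩
    have h2 : K x ≤ F x := hKF x hx
    rw [hvF]; linarith
  · -- OPTF ≤ 2 * OPTI
    obtain ⟨x, hx, hcx, hvK⟩ := hI.1
    have h1 : OPTF ≤ F x := hFo.2 ⟨x, hx, hcx, rfl⟩
    -- feasibility of indicator vectors of subsets of A := {i | x i = 0}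
    set A : Finset (Fin n) := univ.filter (fun i => x i = 0) with hA
    have hfeas : ∀ S : Finset (Fin n), S ⊆ A → ∑ i ∈ S, w i ≤ C →
        ∑ i ∈ S, p i ≤ K x := by
      intro S hSA hSw
      apply (hK x hx).2
      refine ⟨fun i => if i ∈ S then 1 else 0, fun i => ?_, ?_, fun i => ?_, ?_⟩
      · by_cases h : i ∈ S <;> simp [h]
      · calc ∑ i, w i * (if i ∈ S then (1:ℝ) else 0)
            = ∑ i, (if i ∈ S then w i else 0) := by
              exact Finset.sum_congr rfl (fun i _ => by by_cases h : i ∈ S <;> simp [h])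
          _ = ∑ i ∈ S, w i := by rw [Finset.sum_ite_mem, Finset.univ_inter]
          _ ≤ C := hSw
      · by_cases h : i ∈ S
        · have : x i = 0 := (mem_filter.mp (hSA h)).2
          simp [h, this]
        · rcases hx i with h0 | h0 <;> simp [h, h0]
      · calc ∑ i ∈ S, p i
            = ∑ i, (if i ∈ S then p i else 0) := by
              rw [Finset.sum_ite_mem, Finset.univ_inter]
          _ = ∑ i, p i * (if i ∈ S then (1:ℝ) else 0) := by
              exact Finset.sum_congr rfl (fun i _ => by by_cases h : i ∈ S <;> simp [h])
    have hK0 : 0 ≤ K x := by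
      have := hfeas ∅ (empty_subset _) (by simp [hC])
      simpa using this
    -- F x is attained by some fractional y
    obtain ⟨y, hy01, hyw, hyx, hval⟩ := (hF x hx).1
    have hyA : ∀ i ∉ A, y i = 0 := by
      intro i hi
      have hx1 : x i = 1 := by
        rcases hx i with h0 | h0
        · exact absurd (mem_filter.mpr ⟨mem_univ i, h0⟩) hi
        · exact h0
      have := hyx i
      rw [hx1] at this
      linarith [(hy01 i).1]
    have h2 : F x ≤ 2 * K x := by
      rw [hval]
      exact frac_le_two_int C hC p w hp hw hwC A (K x) hK0 hfeas y
        (fun i => (hy01 i).1) (fun i => (hy01 i).2) hyA hyw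
    rw [hvK]; linarith
end

section
/- Fix α ≥ 0, δ > 0, and let f_α(i, P̃) be defined by: f_α(i, P̃) = 0 if i > n and P̃ ≥ 0; f_α(i, P̃) = ∞ if i > n and P̃ < 0; and f_α(i, P̃) = min( c_i + f_α(i+1, P̃), f_α(i+1, δ·⌊(P̃ − max(0, p_i − α·w_i))/δ⌋) ) for i ≤ n. Then for any P̃ that is a nonnegative multiple of δ, f_α(1, P̃) ≤ B if and only if there exists x ∈ {0,1}^n with c⊤x ≤ B and F̃_α(x) ≤ P̃, where F̃_α is the incrementally-rounded sum Σ_i (1-x_i)·max(0, p_i - α·w_i). -/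
/-- Rounded prefix-sum process, peeling items from the front:
`dpRun δ a x i m` is the incrementally-rounded sum over items `i, i+1, …, i+m-1`,
starting from value `0`. -/
noncomputable def dpRun (δ : ℝ) (a x : ℕ → ℝ) : ℕ → ℕ → ℝ
  | _, 0 => 0
  | i, m + 1 => δ * ⌈((1 - x i) * a i) / δ⌉ + dpRun δ a x (i + 1) m

lemma dpRun_multiple (δ : ℝ) (a x : ℕ → ℝ) : ∀ (m i : ℕ), ∃ z : ℤ, dpRun δ a x i m = δ * z := by
  intro m
  induction m with
  | zero => intro i; exact ⟨0, by simp [dpRun]⟩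
  | succ m ih =>
      intro i
      obtain ⟨z, hz⟩ := ih (i + 1)
      refine ⟨⌈((1 - x i) * a i) / δ⌉ + z, ?_⟩
      simp [dpRun, hz]; push_cast; ring

lemma dpRun_congr (δ : ℝ) (a x y : ℕ → ℝ) :
    ∀ (m i : ℕ), (∀ j, i ≤ j → j < i + m → x j = y j) →
      dpRun δ a x i m = dpRun δ a y i m := by
  intro m
  induction m with
  | zero => intro i _; rfl
  | succ m ih =>
      intro i h
      have hx : x i = y i := h i le_rfl (by omega)
      simp only [dpRun, hx]
      rw [ih (i + 1) (fun j h1 h2 => h j (by omega) (by omega))]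

/-- If `s` follows the rounded recursion on `[i, i+m)` starting from a multiple of `δ`,
then `s (i+m)` is that start plus the process value from `0`. -/
lemma dpRun_seq (δ : ℝ) (hδ : δ ≠ 0) (a x s : ℕ → ℝ) :
    ∀ (m i : ℕ) (z : ℤ), s i = δ * z →
      (∀ j, i ≤ j → j < i + m → s (j + 1) = δ * ⌈(s j + (1 - x j) * a j) / δ⌉) →
      s (i + m) = δ * z + dpRun δ a x i m := by
  intro m
  induction m with
  | zero => intro i z hz _; simp [dpRun, hz, mul_comm]
  | succ m ih =>
      intro i z hz hrec
      have h1 : s (i + 1) = δ * (z + ⌈((1 - x i) * a i) / δ⌉ : ℤ) := by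
        rw [hrec i le_rfl (by omega), hz]
        have : (δ * (z : ℝ) + (1 - x i) * a i) / δ = (z : ℝ) + ((1 - x i) * a i) / δ := by
          field_simp
        rw [this, add_comm ((z : ℝ)), Int.ceil_add_intCast]
        push_cast; ring
      have h2 := ih (i + 1) (z + ⌈((1 - x i) * a i) / δ⌉) h1
        (fun j hj1 hj2 => hrec j (by omega) (by omega))
      have h3 : i + (m + 1) = (i + 1) + m := by omega
      rw [h3, h2]
      simp [dpRun]; push_cast; ring

lemma ereal_coe_add_le_iff (cc B : ℝ) (y : EReal) :
    (cc : EReal) + y ≤ (B : EReal) ↔ y ≤ ((B - cc : ℝ) : EReal) := by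
  induction y using EReal.rec with
  | bot => simp
  | top => simp only [EReal.coe_add_top, top_le_iff]
           simp [← EReal.coe_sub]
  | coe r => norm_cast; constructor <;> intro h <;> linarith

/-- correctness of the budget-minimizing DP over rounded profits.
Items are indexed 0,…,n-1 (so the paper's f(1,·) is f 0 here and the base case i > n is i ≥ n).
For P̃ a nonnegative multiple of δ, f 0 P̃ ≤ B iff some feasible interdiction x
(c⊤x ≤ B) has incrementally-rounded value F̃_α(x) ≤ P̃. -/
theorem stmt10 (n : ℕ) (hn : 0 < n) (B : ℝ) (hB : 0 ≤ B)
    (c p w : ℕ → ℝ) (hc : ∀ i, 0 ≤ c i) (hp : ∀ i, 0 ≤ p i) (hw : ∀ i, 0 ≤ w i)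
    (α δ : ℝ) (hα : 0 ≤ α) (hδ : 0 < δ)
    (f : ℕ → ℝ → EReal)
    (hbase : ∀ (i : ℕ) (P : ℝ), n ≤ i → f i P = if 0 ≤ P then (0 : EReal) else ⊤)
    (hrec : ∀ (i : ℕ) (P : ℝ), i < n →
      f i P = min ((c i : EReal) + f (i + 1) P)
                  (f (i + 1) (δ * ⌊(P - max 0 (p i - α * w i)) / δ⌋)))
    (Pt : ℝ) (hPt : ∃ k : ℕ, Pt = (k : ℝ) * δ) :
    f 0 Pt ≤ (B : EReal) ↔
      ∃ x : ℕ → ℝ, (∀ i < n, x i = 0 ∨ x i = 1) ∧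
        (∑ i ∈ Finset.range n, c i * x i ≤ B) ∧
        ∃ s : ℕ → ℝ, s 0 = 0 ∧
          (∀ i < n, s (i + 1) = δ * ⌈(s i + (1 - x i) * max 0 (p i - α * w i)) / δ⌉) ∧
          s n ≤ Pt := by
  set a : ℕ → ℝ := fun j => max 0 (p j - α * w j) with ha
  have hδ' : δ ≠ 0 := ne_of_gt hδ
  -- floor identity used in the recursive step
  have hfloor : ∀ (k : ℤ) (i : ℕ),
      δ * (⌊(δ * (k : ℝ) - a i) / δ⌋ : ℝ) = δ * ((k - ⌈a i / δ⌉ : ℤ) : ℝ) := by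
    intro k i
    congr 2
    have h1 : (δ * (k : ℝ) - a i) / δ = (k : ℝ) + (-(a i)) / δ := by field_simp; ring
    rw [h1, add_comm, Int.floor_add_intCast, neg_div, Int.floor_neg]
    ring
  have key : ∀ (m i : ℕ), i + m = n → ∀ (B : ℝ) (k : ℤ),
      (f i (δ * k) ≤ (B : EReal) ↔ ∃ x : ℕ → ℝ,
        (∀ j, i ≤ j → j < n → x j = 0 ∨ x j = 1) ∧
        (∑ j ∈ Finset.Ico i n, c j * x j ≤ B) ∧
        dpRun δ a x i m ≤ δ * k) := by
    intro m
    induction m with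
    | zero =>
        intro i hi B k
        rw [hbase i _ (by omega)]
        have hIco : Finset.Ico i n = ∅ := by rw [Finset.Ico_eq_empty_iff]; omega
        by_cases h : (0 : ℝ) ≤ δ * k
        · rw [if_pos h]
          constructor
          · intro hb
            have hb' : (0:ℝ) ≤ B := by exact_mod_cast hb
            refine ⟨fun _ => 0, fun j h1 h2 => by omega, by simp [hIco, hb'], ?_⟩
            simpa [dpRun] using h
          · rintro ⟨x, _, hsum, _⟩
            rw [hIco, Finset.sum_empty] at hsum
            exact_mod_cast hsum
        · rw [if_neg h]
          constructor
          · intro hb; exact absurd hb (by simp)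
          · rintro ⟨x, _, _, hrun⟩
            exact absurd (by simpa [dpRun] using hrun) h
    | succ m ih =>
        intro i hi B k
        have hin : i < n := by omega
        rw [hrec i _ hin]
        have harg : δ * (⌊(δ * (k : ℝ) - a i) / δ⌋ : ℝ) = δ * ((k - ⌈a i / δ⌉ : ℤ) : ℝ) :=
          hfloor k i
        rw [show (δ * (k:ℝ) - max 0 (p i - α * w i)) = (δ * (k:ℝ) - a i) from rfl]
        rw [harg, min_le_iff, ereal_coe_add_le_iff,
          ih (i + 1) (by omega) (B - c i) k, ih (i + 1) (by omega) B (k - ⌈a i / δ⌉)]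
        have hsplit : ∀ x : ℕ → ℝ, ∑ j ∈ Finset.Ico i n, c j * x j
            = c i * x i + ∑ j ∈ Finset.Ico (i + 1) n, c j * x j := by
          intro x; exact Finset.sum_eq_sum_Ico_succ_bot hin _
        constructor
        · rintro (⟨x', hbin, hsum, hrun⟩ | ⟨x', hbin, hsum, hrun⟩)
          · -- take x i = 1
            refine ⟨Function.update x' i 1, ?_, ?_, ?_⟩
            · intro j h1 h2
              by_cases hji : j = i
              · right; subst hji; simp [Function.update_self]
              · rw [Function.update_of_ne hji]; exact hbin j (by omega) h2
            · rw [hsplit]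
              have heq : ∑ j ∈ Finset.Ico (i + 1) n, c j * (Function.update x' i 1 j)
                  = ∑ j ∈ Finset.Ico (i + 1) n, c j * x' j := by
                apply Finset.sum_congr rfl
                intro j hj
                simp only [Finset.mem_Ico] at hj
                rw [Function.update_of_ne (by omega)]
              rw [heq, Function.update_self]; linarith
            · simp only [dpRun, Function.update_self, sub_self, zero_mul, zero_div,
                Int.ceil_zero, Int.cast_zero, mul_zero, zero_add]
              rw [dpRun_congr δ a _ x' m (i + 1)
                (fun j h1 h2 => Function.update_of_ne (by omega) _ _)]
              exact hrun
          · -- take x i = 0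
            refine ⟨Function.update x' i 0, ?_, ?_, ?_⟩
            · intro j h1 h2
              by_cases hji : j = i
              · left; subst hji; simp [Function.update_self]
              · rw [Function.update_of_ne hji]; exact hbin j (by omega) h2
            · rw [hsplit]
              have heq : ∑ j ∈ Finset.Ico (i + 1) n, c j * (Function.update x' i 0 j)
                  = ∑ j ∈ Finset.Ico (i + 1) n, c j * x' j := by
                apply Finset.sum_congr rfl
                intro j hj
                simp only [Finset.mem_Ico] at hj
                rw [Function.update_of_ne (by omega)]
              rw [heq, Function.update_self]; linarith
            · simp only [dpRun, Function.update_self, sub_zero, one_mul]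
              rw [dpRun_congr δ a _ x' m (i + 1)
                (fun j h1 h2 => Function.update_of_ne (by omega) _ _)]
              push_cast at hrun
              rw [mul_sub] at hrun
              linarith
        · rintro ⟨x, hbin, hsum, hrun⟩
          rcases hbin i le_rfl hin with h0 | h1
          · right
            refine ⟨x, fun j h1 h2 => hbin j (by omega) h2, ?_, ?_⟩
            · rw [hsplit] at hsum; rw [h0] at hsum; linarith
            · simp only [dpRun, h0, sub_zero, one_mul] at hrun
              push_cast
              rw [mul_sub]
              linarith
          · left
            refine ⟨x, fun j h1 h2 => hbin j (by omega) h2, ?_, ?_⟩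
            · rw [hsplit] at hsum; rw [h1] at hsum; linarith
            · simp only [dpRun, h1, sub_self, zero_mul, zero_div, Int.ceil_zero,
                Int.cast_zero, mul_zero, zero_add] at hrun
              exact hrun
  obtain ⟨k, hk⟩ := hPt
  have hPt' : Pt = δ * ((k : ℤ) : ℝ) := by push_cast; linarith
  rw [hPt', key n 0 (zero_add n) B (k : ℤ)]
  constructor
  · rintro ⟨x, hbin, hsum, hrun⟩
    refine ⟨x, fun j hj => hbin j (Nat.zero_le j) hj, ?_, ?_⟩
    · rwa [← Finset.range_eq_Ico] at hsum
    · set s : ℕ → ℝ := fun j =>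
        Nat.rec (motive := fun _ => ℝ) 0
          (fun j sj => δ * ⌈(sj + (1 - x j) * a j) / δ⌉) j with hs
      refine ⟨s, rfl, fun j _ => rfl, ?_⟩
      have := dpRun_seq δ hδ' a x s n 0 0 (by simp [hs]) (fun j _ _ => rfl)
      simp only [zero_add, Int.cast_zero, mul_zero] at this
      rw [this]; exact hrun
  · rintro ⟨x, hbin, hsum, s, hs0, hsrec, hsn⟩
    refine ⟨x, fun j _ hj => hbin j hj, ?_, ?_⟩
    · rwa [← Finset.range_eq_Ico]
    · have := dpRun_seq δ hδ' a x s n 0 0 (by simpa using hs0)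
        (fun j _ hj => hsrec j (by omega))
      simp only [zero_add, Int.cast_zero, mul_zero] at this
      rw [← this]; exact hsn
end

section
/- If w_{ij} ≤ C_j for all i ∈ [n] and j ∈ [t], then for every x ∈ {0,1}^n, the fractional t-dimensional knapsack value F(x) satisfies F(x) ≤ (1+t)·K(x), where K(x) is the corresponding 0-1 optimum. -/
open Finset

lemma knap_step {n t : ℕ} (p : Fin n → ℝ) (W : Fin t → Fin n → ℝ)
    (y : Fin n → ℝ) (hybox : ∀ i, 0 ≤ y i ∧ y i ≤ 1)
    (hcard : t < (univ.filter fun i => y i ≠ 0 ∧ y i ≠ 1).card) :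
    ∃ z : Fin n → ℝ, (∀ i, 0 ≤ z i ∧ z i ≤ 1) ∧
      (∀ j, ∑ i, W j i * z i = ∑ i, W j i * y i) ∧
      (∀ i, (y i = 0 ∨ y i = 1) → z i = y i) ∧
      (univ.filter fun i => z i ≠ 0 ∧ z i ≠ 1).card
        < (univ.filter fun i => y i ≠ 0 ∧ y i ≠ 1).card ∧
      ∑ i, p i * y i ≤ ∑ i, p i * z i := by
  set S : Finset (Fin n) := univ.filter fun i => y i ≠ 0 ∧ y i ≠ 1 with hSdef
  have hSfrac : ∀ i ∈ S, 0 < y i ∧ y i < 1 := by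
    intro i hi
    rw [hSdef, Finset.mem_filter] at hi
    constructor
    · exact lt_of_le_of_ne (hybox i).1 (Ne.symm hi.2.1)
    · exact lt_of_le_of_ne (hybox i).2 hi.2.2
  -- the family of columns indexed by S is linearly dependent
  have hdep : ¬ LinearIndependent ℝ (fun i : S => (fun j => W j i : Fin t → ℝ)) := by
    intro h
    have h1 := h.fintype_card_le_finrank
    rw [Module.finrank_fin_fun, Fintype.card_coe] at h1
    omega
  obtain ⟨g, hgsum, i₁, hgi₁⟩ := Fintype.not_linearIndependent_iff.mp hdep
  -- direction d₀, then orient it so that p ⬝ d ≥ 0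
  set d₀ : Fin n → ℝ := fun i => if h : i ∈ S then g ⟨i, h⟩ else 0 with hd₀def
  set c : ℝ := if 0 ≤ ∑ i, p i * d₀ i then 1 else -1 with hcdef
  set d : Fin n → ℝ := fun i => c * d₀ i with hddef
  have hcne : c ≠ 0 := by rw [hcdef]; split <;> norm_num
  have hpd : 0 ≤ ∑ i, p i * d i := by
    have hsum : ∑ i, p i * d i = c * ∑ i, p i * d₀ i := by
      rw [Finset.mul_sum]; apply Finset.sum_congr rfl; intro i _; rw [hddef]; ring
    rw [hsum, hcdef]
    split
    · next h => simpa using h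
    · next h => nlinarith [not_le.mp h]
  have hdsupp : ∀ i, i ∉ S → d i = 0 := by
    intro i hi; simp [hddef, hd₀def, hi]
  have hWd : ∀ j, ∑ i, W j i * d i = 0 := by
    intro j
    have h0 : ∑ i : S, g i * W j i = 0 := by
      have := congrFun hgsum j
      simpa [mul_comm] using this
    have h1 : ∑ i, W j i * d₀ i = ∑ i : S, g i * W j i := by
      rw [← Finset.sum_subset (Finset.subset_univ S)
        (fun i _ hi => by simp [hd₀def, hi])]
      rw [← Finset.sum_attach S (fun i => W j i * d₀ i)]
      apply Finset.sum_congr rfl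
      intro i _
      rw [hd₀def]
      simp only [dif_pos i.2, Subtype.coe_eta]
      ring
    have h2 : ∑ i, W j i * d i = c * ∑ i, W j i * d₀ i := by
      rw [Finset.mul_sum]; apply Finset.sum_congr rfl; intro i _; rw [hddef]; ring
    rw [h2, h1, h0, mul_zero]
  have hdne : d i₁ ≠ 0 := by
    have : d₀ (i₁ : Fin n) = g i₁ := by
      rw [hd₀def]; simp only [dif_pos i₁.2, Subtype.coe_eta]
    simp only [hddef, this]
    exact mul_ne_zero hcne hgi₁
  -- step length
  set T : Finset (Fin n) := univ.filter fun i => d i ≠ 0 with hTdef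
  have hTne : T.Nonempty := ⟨i₁, by simp [hTdef, hdne]⟩
  have hTS : ∀ i ∈ T, i ∈ S := by
    intro i hi
    by_contra h
    rw [hTdef, Finset.mem_filter] at hi
    exact hi.2 (hdsupp i h)
  set r : Fin n → ℝ := fun i => if 0 < d i then (1 - y i) / d i else y i / (-d i) with hrdef
  have hrpos : ∀ i ∈ T, 0 < r i := by
    intro i hi
    obtain ⟨hy0, hy1⟩ := hSfrac i (hTS i hi)
    have hdne' : d i ≠ 0 := by rw [hTdef, Finset.mem_filter] at hi; exact hi.2
    simp only [hrdef]
    rcases lt_or_gt_of_ne hdne' with h | h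
    · rw [if_neg (by linarith)]
      exact div_pos hy0 (by linarith)
    · rw [if_pos h]
      exact div_pos (by linarith) h
  set ε : ℝ := T.inf' hTne r with hεdef
  have hεpos : 0 < ε := by
    rw [hεdef, Finset.lt_inf'_iff]
    exact hrpos
  have hεle : ∀ i ∈ T, ε ≤ r i := fun i hi => Finset.inf'_le r hi
  set z : Fin n → ℝ := fun i => y i + ε * d i with hzdef
  -- bounds on z for coordinates where d ≠ 0
  have hkey : ∀ i ∈ T, 0 ≤ z i ∧ z i ≤ 1 := by
    intro i hi
    obtain ⟨hy0, hy1⟩ := hSfrac i (hTS i hi)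
    have hdne' : d i ≠ 0 := by rw [hTdef, Finset.mem_filter] at hi; exact hi.2
    have hri := hεle i hi
    rcases lt_or_gt_of_ne hdne' with h | h
    · have hrv : r i = y i / (-d i) := by
        simp only [hrdef]; rw [if_neg (by linarith)]
      rw [hrv] at hri
      have h2 : ε * (-d i) ≤ y i / (-d i) * (-d i) :=
          mul_le_mul_of_nonneg_right hri (by linarith)
      rw [div_mul_cancel₀ _ (by linarith : (-d i) ≠ 0)] at h2
      constructor
      · show 0 ≤ y i + ε * d i
        nlinarith
      · show y i + ε * d i ≤ 1
        nlinarith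
    · have hrv : r i = (1 - y i) / d i := by
        simp only [hrdef]; rw [if_pos h]
      rw [hrv] at hri
      have h2 : ε * d i ≤ (1 - y i) / d i * d i := mul_le_mul_of_nonneg_right hri (by linarith)
      rw [div_mul_cancel₀ _ (by linarith : d i ≠ 0)] at h2
      constructor
      · show 0 ≤ y i + ε * d i
        nlinarith
      · show y i + ε * d i ≤ 1
        linarith
  have hzeq : ∀ i, i ∉ T → z i = y i := by
    intro i hi
    have : d i = 0 := by
      by_contra h
      exact hi (by simp [hTdef, h])
    simp [hzdef, this]
  refine ⟨z, ?_, ?_, ?_, ?_, ?_⟩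
  · intro i
    by_cases hi : i ∈ T
    · exact hkey i hi
    · rw [hzeq i hi]; exact hybox i
  · intro j
    have : ∑ i, W j i * z i = (∑ i, W j i * y i) + ε * ∑ i, W j i * d i := by
      rw [Finset.mul_sum, ← Finset.sum_add_distrib]
      apply Finset.sum_congr rfl; intro i _; rw [hzdef]; ring
    rw [this, hWd, mul_zero, add_zero]
  · intro i hi
    apply hzeq
    intro hT
    obtain ⟨h0, h1⟩ := hSfrac i (hTS i hT)
    rcases hi with h | h <;> linarith
  · -- cardinality decreases
    obtain ⟨i₀, hi₀T, hi₀r⟩ := Finset.exists_mem_eq_inf' hTne r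
    have hi₀S : i₀ ∈ S := hTS i₀ hi₀T
    have hdne' : d i₀ ≠ 0 := by rw [hTdef, Finset.mem_filter] at hi₀T; exact hi₀T.2
    obtain ⟨hy0, hy1⟩ := hSfrac i₀ hi₀S
    have hz₀ : z i₀ = 0 ∨ z i₀ = 1 := by
      rw [← hεdef] at hi₀r
      rcases lt_or_gt_of_ne hdne' with h | h
      · left
        have hrv : r i₀ = y i₀ / (-d i₀) := by
          simp only [hrdef]; rw [if_neg (by linarith)]
        have hmul : y i₀ / (-d i₀) * d i₀ = -y i₀ := by
          rw [div_mul_eq_mul_div, mul_div_assoc, div_neg, div_self hdne']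
          ring
        show y i₀ + ε * d i₀ = 0
        rw [hi₀r, hrv, hmul]; ring
      · right
        have hrv : r i₀ = (1 - y i₀) / d i₀ := by
          simp only [hrdef]; rw [if_pos h]
        have hmul : (1 - y i₀) / d i₀ * d i₀ = 1 - y i₀ :=
          div_mul_cancel₀ _ hdne'
        show y i₀ + ε * d i₀ = 1
        rw [hi₀r, hrv, hmul]; ring
    apply Finset.card_lt_card
    rw [Finset.ssubset_iff_of_subset]
    · exact ⟨i₀, hi₀S, by simp only [Finset.mem_filter]; tauto⟩
    · intro i hi
      rw [Finset.mem_filter] at hi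
      by_contra h
      have : z i = y i := hzeq i (fun hT => h (hTS i hT))
      rw [hSdef, Finset.mem_filter] at h
      push_neg at h
      rcases h (Finset.mem_univ i) (by rw [← this]; exact hi.2.1) with h1
      exact hi.2.2 (by rw [this]; exact h1)
  · have : ∑ i, p i * z i = (∑ i, p i * y i) + ε * ∑ i, p i * d i := by
      rw [Finset.mul_sum, ← Finset.sum_add_distrib]
      apply Finset.sum_congr rfl; intro i _; rw [hzdef]; ring
    rw [this]
    nlinarith

lemma knap_reduce {n t : ℕ} (p : Fin n → ℝ) (W : Fin t → Fin n → ℝ) :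
    ∀ (N : ℕ) (y : Fin n → ℝ), (∀ i, 0 ≤ y i ∧ y i ≤ 1) →
    (univ.filter fun i => y i ≠ 0 ∧ y i ≠ 1).card ≤ N →
    ∃ z : Fin n → ℝ, (∀ i, 0 ≤ z i ∧ z i ≤ 1) ∧
      (∀ j, ∑ i, W j i * z i = ∑ i, W j i * y i) ∧
      (∀ i, (y i = 0 ∨ y i = 1) → z i = y i) ∧
      (univ.filter fun i => z i ≠ 0 ∧ z i ≠ 1).card ≤ t ∧
      ∑ i, p i * y i ≤ ∑ i, p i * z i := by
  intro N
  induction N with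
  | zero =>
    intro y hybox hcard
    exact ⟨y, hybox, fun j => rfl, fun i _ => rfl, le_trans hcard (Nat.zero_le t), le_refl _⟩
  | succ N ih =>
    intro y hybox hcard
    by_cases hc : (univ.filter fun i => y i ≠ 0 ∧ y i ≠ 1).card ≤ t
    · exact ⟨y, hybox, fun j => rfl, fun i _ => rfl, hc, le_refl _⟩
    · obtain ⟨z', hz'box, hz'cap, hz'fix, hz'card, hz'val⟩ :=
        knap_step p W y hybox (not_le.mp hc)
      obtain ⟨z, hzbox, hzcap, hzfix, hzcard, hzval⟩ :=
        ih z' hz'box (by omega)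
      refine ⟨z, hzbox, ?_, ?_, hzcard, le_trans hz'val hzval⟩
      · intro j; rw [hzcap j, hz'cap j]
      · intro i hi
        rw [hzfix i (by rw [hz'fix i hi]; exact hi), hz'fix i hi]

theorem stmt11 (n t : ℕ) (hn : 0 < n) (ht : 0 < t)
    (C : Fin t → ℝ) (hC : ∀ j, 0 ≤ C j)
    (p : Fin n → ℝ) (hp : ∀ i, 0 ≤ p i)
    (W : Fin t → Fin n → ℝ) (hW : ∀ j i, 0 ≤ W j i) (hWC : ∀ j i, W j i ≤ C j)
    (x : Fin n → ℝ) (hx : ∀ i, x i = 0 ∨ x i = 1)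
    (K F : ℝ)
    (hK : IsGreatest {v : ℝ | ∃ y : Fin n → ℝ,
        (∀ i, y i = 0 ∨ y i = 1) ∧ (∀ j, ∑ i, W j i * y i ≤ C j) ∧
        (∀ i, y i ≤ 1 - x i) ∧ v = ∑ i, p i * y i} K)
    (hF : IsGreatest {v : ℝ | ∃ y : Fin n → ℝ,
        (∀ i, 0 ≤ y i ∧ y i ≤ 1) ∧ (∀ j, ∑ i, W j i * y i ≤ C j) ∧
        (∀ i, y i ≤ 1 - x i) ∧ v = ∑ i, p i * y i} F) :
    F ≤ (1 + t) * K := by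
  obtain ⟨⟨y, hybox, hycap, hyx, hyval⟩, -⟩ := hF
  have hx1 : ∀ i, x i ≤ 1 := by
    intro i; rcases hx i with h | h <;> rw [h] <;> norm_num
  -- K is nonnegative (zero vector is feasible)
  have hK0 : (0:ℝ) ≤ K := by
    apply hK.2
    refine ⟨fun _ => 0, fun i => Or.inl rfl, fun j => by simpa using hC j,
      fun i => by simp [sub_nonneg]; exact hx1 i, by simp⟩
  -- reduce y to z with at most t fractional coordinates
  obtain ⟨z, hzbox, hzcap, hzfix, hzcard, hzval⟩ :=
    knap_reduce p W n y hybox (le_trans (Finset.card_le_card (Finset.filter_subset _ _))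
      (by simp))
  have hzx : ∀ i, z i ≤ 1 - x i := by
    intro i
    rcases hx i with h | h
    · rw [h]; simpa using (hzbox i).2
    · have hy0 : y i = 0 := le_antisymm (by have := hyx i; rw [h] at this; simpa using this)
        (hybox i).1
      rw [hzfix i (Or.inl hy0), hy0, h]; norm_num
  -- the set of "fully chosen" items and fractional items of z
  set A : Finset (Fin n) := univ.filter fun i => z i = 1 with hAdef
  set Sz : Finset (Fin n) := univ.filter fun i => z i ≠ 0 ∧ z i ≠ 1 with hSzdef
  -- the integral part is feasible for K
  have hA : ∑ i ∈ A, p i ≤ K := by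
    apply hK.2
    refine ⟨fun i => if z i = 1 then 1 else 0, ?_, ?_, ?_, ?_⟩
    · intro i; by_cases h : z i = 1 <;> simp [h]
    · intro j
      refine le_trans (le_trans (Finset.sum_le_sum ?_) (le_of_eq (hzcap j))) (hycap j)
      intro i _
      by_cases h : z i = 1
      · simp [h]
      · simp only [if_neg h, mul_zero]
        exact mul_nonneg (hW j i) (hzbox i).1
    · intro i
      by_cases h : z i = 1
      · simp only [if_pos h]
        have h2 := hzx i; rw [h] at h2; exact h2
      · simp only [if_neg h]
        have := hx1 i; linarith
    · rw [hAdef, Finset.sum_filter]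
      apply Finset.sum_congr rfl
      intro i _
      by_cases h : z i = 1 <;> simp [h]
  -- each item alone (with z i fractional, hence x i = 0) is feasible for K
  have hsingle : ∀ i ∈ Sz, p i ≤ K := by
    intro i₀ hi₀
    rw [hSzdef, Finset.mem_filter] at hi₀
    have hz0 : 0 < z i₀ := lt_of_le_of_ne (hzbox i₀).1 (Ne.symm hi₀.2.1)
    have hx0 : x i₀ = 0 := by
      rcases hx i₀ with h | h
      · exact h
      · exfalso; have := hzx i₀; rw [h] at this; linarith
    apply hK.2
    refine ⟨fun i => if i = i₀ then 1 else 0, ?_, ?_, ?_, ?_⟩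
    · intro i; by_cases h : i = i₀ <;> simp [h]
    · intro j
      have hsum : ∑ i, W j i * (if i = i₀ then (1:ℝ) else 0) = W j i₀ := by
        simp [mul_ite]
      simp only []
      rw [hsum]
      exact hWC j i₀
    · intro i
      by_cases h : i = i₀
      · simp only [if_pos h]; rw [h, hx0]; norm_num
      · simp only [if_neg h]; have := hx1 i; linarith
    · have hsum : ∑ i, p i * (if i = i₀ then (1:ℝ) else 0) = p i₀ := by
        simp [mul_ite]
      simp only []
      rw [hsum]
  -- bound the fractional part
  have hfrac : ∑ i ∈ Sz, p i * z i ≤ t * K := by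
    calc ∑ i ∈ Sz, p i * z i ≤ ∑ i ∈ Sz, K := by
          apply Finset.sum_le_sum
          intro i hi
          calc p i * z i ≤ p i * 1 := mul_le_mul_of_nonneg_left (hzbox i).2 (hp i)
            _ = p i := mul_one _
            _ ≤ K := hsingle i hi
      _ = Sz.card * K := by rw [Finset.sum_const, nsmul_eq_mul]
      _ ≤ t * K := by
          apply mul_le_mul_of_nonneg_right _ hK0
          exact_mod_cast hzcard
  -- split the sum
  have hsplit : ∑ i, p i * z i = ∑ i ∈ A, p i + ∑ i ∈ Sz, p i * z i := by
    have hdisj : Disjoint A Sz := by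
      rw [Finset.disjoint_left]
      intro i hiA hiSz
      rw [hAdef, Finset.mem_filter] at hiA
      rw [hSzdef, Finset.mem_filter] at hiSz
      exact hiSz.2.2 hiA.2
    have hsub : A ∪ Sz ⊆ univ := Finset.subset_univ _
    have hzero : ∀ i ∈ univ, i ∉ A ∪ Sz → p i * z i = 0 := by
      intro i _ hi
      rw [Finset.mem_union, hAdef, hSzdef] at hi
      push_neg at hi
      simp only [Finset.mem_filter, Finset.mem_univ, true_and] at hi
      by_cases h0 : z i = 0
      · rw [h0, mul_zero]
      · exact absurd ⟨h0, hi.1⟩ hi.2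
    rw [← Finset.sum_subset hsub hzero, Finset.sum_union hdisj]
    congr 1
    apply Finset.sum_congr rfl
    intro i hi
    rw [hAdef, Finset.mem_filter] at hi
    rw [hi.2, mul_one]
  rw [hyval]
  calc ∑ i, p i * y i ≤ ∑ i, p i * z i := hzval
    _ = ∑ i ∈ A, p i + ∑ i ∈ Sz, p i * z i := hsplit
    _ ≤ K + t * K := add_le_add hA hfrac
    _ = (1 + t) * K := by ring
end

section
/- If an algorithm outputs x̃ ∈ {0,1}^n with c⊤x̃ ≤ B and F(x̃) ≤ (1+ε/2)·OPT_F, and w_i ≤ C for all i, then there exists an optimal packing y for K(x̃) such that K(x̃) ≤ (2+ε)·OPT_I; i.e., x̃ is a (2+ε)-approximate interdiction set. -/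
lemma sum_mul_update {n : ℕ} (p f : Fin n → ℝ) (j : Fin n) (b : ℝ) :
    ∑ i, p i * Function.update f j b i = (∑ i, p i * f i) + p j * (b - f j) := by
  have h : ∀ i, p i * Function.update f j b i
      = p i * f i + (if i = j then p j * (b - f j) else 0) := by
    intro i
    by_cases h : i = j
    · subst h; simp [Function.update_self]; ring
    · simp [Function.update_of_ne h, h]
  simp_rw [h, Finset.sum_add_distrib, Finset.sum_ite_eq' Finset.univ j,
    if_pos (Finset.mem_univ j)]

lemma fracBound {n : ℕ} {C : ℝ} (hC : 0 ≤ C) (p w x : Fin n → ℝ)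
    (hp : ∀ i, 0 ≤ p i) (hw : ∀ i, 0 ≤ w i) (hwC : ∀ i, w i ≤ C)
    (hx : ∀ i, x i = 0 ∨ x i = 1) (Kx : ℝ)
    (hub : ∀ z : Fin n → ℝ, (∀ i, z i = 0 ∨ z i = 1) → (∑ i, w i * z i) ≤ C →
      (∀ i, z i ≤ 1 - x i) → (∑ i, p i * z i) ≤ Kx)
    (y : Fin n → ℝ) (hy : ∀ i, 0 ≤ y i ∧ y i ≤ 1) (hyw : (∑ i, w i * y i) ≤ C)
    (hyx : ∀ i, y i ≤ 1 - x i) : (∑ i, p i * y i) ≤ 2 * Kx := by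
  have hxnn : ∀ i, (0:ℝ) ≤ 1 - x i := by
    intro i; rcases hx i with h | h <;> simp [h]
  have hK0 : 0 ≤ Kx := by
    have := hub (fun _ => 0) (fun _ => Or.inl rfl) (by simpa) (fun i => hxnn i)
    simpa using this
  suffices H : ∀ k (y : Fin n → ℝ),
      (Finset.univ.filter fun i => y i ≠ 0 ∧ y i ≠ 1).card = k →
      (∀ i, 0 ≤ y i ∧ y i ≤ 1) → (∑ i, w i * y i) ≤ C → (∀ i, y i ≤ 1 - x i) →
      (∑ i, p i * y i) ≤ 2 * Kx by
    exact H _ y rfl hy hyw hyx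
  intro k
  induction k using Nat.strong_induction_on with
  | _ k IH =>
    intro y hk hy hyw hyx
    set S := Finset.univ.filter fun i => y i ≠ 0 ∧ y i ≠ 1 with hS
    have hx0 : ∀ i, y i ≠ 0 → x i = 0 := by
      intro i hne
      rcases hx i with h | h
      · exact h
      · exfalso; have := hyx i; rw [h] at this
        exact hne (le_antisymm (by linarith) (hy i).1)
    -- case: no fractional coordinate
    rcases Finset.eq_empty_or_nonempty S with hSe | hSne
    · have hint : ∀ i, y i = 0 ∨ y i = 1 := by
        intro i
        have : i ∉ S := by rw [hSe]; exact Finset.notMem_empty i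
        simp only [hS, Finset.mem_filter, Finset.mem_univ, true_and, not_and_or,
          not_not] at this
        tauto
      have := hub y hint hyw hyx
      linarith
    by_cases hw0 : ∃ j ∈ S, w j = 0
    · -- a fractional coordinate with zero weight: push it to 1
      obtain ⟨j, hjS, hwj⟩ := hw0
      have hyj : y j ≠ 0 ∧ y j ≠ 1 := by simpa [hS] using hjS
      set y' := Function.update y j 1 with hy'
      have hsub : (Finset.univ.filter fun i => y' i ≠ 0 ∧ y' i ≠ 1) ⊆ S.erase j := by
        intro l hl
        simp only [Finset.mem_filter, Finset.mem_univ, true_and] at hl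
        have hlj : l ≠ j := by
          intro h; subst h; simp [hy', Function.update_self] at hl
        rw [hy', Function.update_of_ne hlj] at hl
        exact Finset.mem_erase.mpr ⟨hlj, by simp [hS, hl.1, hl.2]⟩
      have hcard : (Finset.univ.filter fun i => y' i ≠ 0 ∧ y' i ≠ 1).card < k := by
        calc (Finset.univ.filter fun i => y' i ≠ 0 ∧ y' i ≠ 1).card
            ≤ (S.erase j).card := Finset.card_le_card hsub
          _ < S.card := Finset.card_erase_lt_of_mem hjS
          _ = k := hk
      have hy'b : ∀ i, 0 ≤ y' i ∧ y' i ≤ 1 := by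
        intro i; by_cases h : i = j
        · subst h; simp [hy', Function.update_self]
        · rw [hy', Function.update_of_ne h]; exact hy i
      have hy'w : (∑ i, w i * y' i) ≤ C := by
        rw [hy', sum_mul_update, hwj]; linarith
      have hy'x : ∀ i, y' i ≤ 1 - x i := by
        intro i; by_cases h : i = j
        · rw [h, hy', Function.update_self, hx0 j hyj.1]; norm_num
        · rw [hy', Function.update_of_ne h]; exact hyx i
      have h1 := IH _ hcard y' rfl hy'b hy'w hy'x
      have h2 : (∑ i, p i * y i) ≤ ∑ i, p i * y' i := by
        rw [hy', sum_mul_update]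
        have := hp j; have := (hy j).2
        nlinarith
      linarith
    push_neg at hw0
    have hwpos : ∀ j ∈ S, 0 < w j := fun j hj => (hw j).lt_of_ne (Ne.symm (hw0 j hj))
    rcases eq_or_lt_of_le (Finset.one_le_card.mpr hSne) with h1 | h2
    · -- exactly one fractional coordinate j
      obtain ⟨j, hSj⟩ := Finset.card_eq_one.mp h1.symm
      have hjS : j ∈ S := by rw [hSj]; exact Finset.mem_singleton_self j
      have hyj : y j ≠ 0 ∧ y j ≠ 1 := by simpa [hS] using hjS
      have hxj : x j = 0 := hx0 j hyj.1
      set y' := Function.update y j 0 with hy'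
      have hint : ∀ i, y' i = 0 ∨ y' i = 1 := by
        intro i; by_cases h : i = j
        · subst h; left; simp [hy', Function.update_self]
        · rw [hy', Function.update_of_ne h]
          have : i ∉ S := by rw [hSj]; simpa using h
          simp only [hS, Finset.mem_filter, Finset.mem_univ, true_and, not_and_or,
            not_not] at this
          tauto
      have hy'w : (∑ i, w i * y' i) ≤ C := by
        rw [hy', sum_mul_update]
        have := mul_nonneg (hw j) (hy j).1
        linarith
      have hy'x : ∀ i, y' i ≤ 1 - x i := by
        intro i; by_cases h : i = j
        · subst h; rw [hy', Function.update_self]; exact hxnn i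
        · rw [hy', Function.update_of_ne h]; exact hyx i
      have hub1 := hub y' hint hy'w hy'x
      -- the singleton {j} is integrally feasible
      have hubj : p j ≤ Kx := by
        have := hub (fun i => if i = j then 1 else 0)
          (fun i => by by_cases h : i = j <;> simp [h])
          (by simpa [mul_ite] using hwC j)
          (fun i => by
            by_cases h : i = j
            · subst h; simp [hxj]
            · simp [h, hxnn i])
        simpa [mul_ite] using this
      rw [hy', sum_mul_update] at hub1
      have := hp j; have := (hy j).2
      nlinarith
    · -- at least two fractional coordinates: exchange argument
      obtain ⟨a, haS, b, hbS, hab⟩ := Finset.one_lt_card.mp h2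
      have move : ∀ a b, a ∈ S → b ∈ S → a ≠ b → p b * w a ≤ p a * w b →
          (∑ i, p i * y i) ≤ 2 * Kx := by
        intro a b haS hbS hab hpq
        have hya : y a ≠ 0 ∧ y a ≠ 1 := by simpa [hS] using haS
        have hyb : y b ≠ 0 ∧ y b ≠ 1 := by simpa [hS] using hbS
        have hwa : 0 < w a := hwpos a haS
        have hwb : 0 < w b := hwpos b hbS
        have hya1 : y a < 1 := lt_of_le_of_ne (hy a).2 hya.2
        have hyb0 : 0 < y b := lt_of_le_of_ne (hy b).1 (Ne.symm hyb.1)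
        set t := min ((1 - y a) * w a) (y b * w b) with htdef
        have ht0 : 0 < t := lt_min (by nlinarith) (by nlinarith)
        set y' := Function.update (Function.update y a (y a + t / w a)) b (y b - t / w b)
          with hy'
        have hev : ∀ l, y' l = if l = b then y b - t / w b else
            if l = a then y a + t / w a else y l := by
          intro l
          by_cases h : l = b
          · subst h; simp [hy', Function.update_self]
          · rw [hy', Function.update_of_ne h, if_neg h]
            by_cases h' : l = a
            · subst h'; rw [Function.update_self, if_pos rfl]
            · rw [Function.update_of_ne h', if_neg h']
        have hta : t / w a ≤ 1 - y a := by
          rw [div_le_iff₀ hwa]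
          calc t ≤ (1 - y a) * w a := min_le_left _ _
            _ = (1 - y a) * w a := rfl
        have htb : t / w b ≤ y b := by
          rw [div_le_iff₀ hwb]; exact min_le_right _ _
        have htap : 0 < t / w a := div_pos ht0 hwa
        have htbp : 0 < t / w b := div_pos ht0 hwb
        have hy'b : ∀ l, 0 ≤ y' l ∧ y' l ≤ 1 := by
          intro l; rw [hev l]
          by_cases h : l = b
          · rw [if_pos h]
            exact ⟨by linarith, by linarith [(hy b).2]⟩
          · rw [if_neg h]
            by_cases h' : l = a
            · rw [if_pos h']
              exact ⟨by linarith [(hy a).1], by linarith⟩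
            · rw [if_neg h']; exact hy l
        have hsum : ∀ q : Fin n → ℝ, (∑ i, q i * y' i)
            = (∑ i, q i * y i) + q a * (t / w a) - q b * (t / w b) := by
          intro q
          rw [hy', sum_mul_update, sum_mul_update,
            Function.update_of_ne (Ne.symm hab)]
          ring
        have hy'w : (∑ i, w i * y' i) ≤ C := by
          rw [hsum w, mul_div_cancel₀ t (ne_of_gt hwa), mul_div_cancel₀ t (ne_of_gt hwb)]
          linarith
        have hy'x : ∀ l, y' l ≤ 1 - x l := by
          intro l; rw [hev l]
          by_cases h : l = b
          · rw [if_pos h, h]; linarith [hyx b]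
          · rw [if_neg h]
            by_cases h' : l = a
            · rw [if_pos h', h', hx0 a hya.1]; linarith
            · rw [if_neg h']; exact hyx l
        -- value does not decrease
        have hval : (∑ i, p i * y i) ≤ ∑ i, p i * y' i := by
          rw [hsum p]
          have : p b * (t / w b) ≤ p a * (t / w a) := by
            rw [mul_div_assoc', mul_div_assoc', div_le_div_iff₀ hwb hwa]
            nlinarith
          linarith
        -- cardinality decreases
        have hdrop : y' a = 1 ∨ y' b = 0 := by
          rcases min_cases ((1 - y a) * w a) (y b * w b) with hmin | hmin
          · left; rw [hev a, if_neg hab, if_pos rfl, htdef, hmin.1,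
              mul_div_cancel_right₀ _ (ne_of_gt hwa)]
            ring
          · right; rw [hev b, if_pos rfl, htdef, hmin.1,
              mul_div_cancel_right₀ _ (ne_of_gt hwb)]
            ring
        have hsub : ∀ e, y' e = 0 ∨ y' e = 1 →
            (Finset.univ.filter fun i => y' i ≠ 0 ∧ y' i ≠ 1) ⊆ S.erase e := by
          intro e hye l hl
          simp only [Finset.mem_filter, Finset.mem_univ, true_and] at hl
          have hle : l ≠ e := by rintro rfl; tauto
          refine Finset.mem_erase.mpr ⟨hle, ?_⟩
          rw [hev l] at hl
          by_cases h : l = b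
          · subst h; exact hbS
          · rw [if_neg h] at hl
            by_cases h' : l = a
            · subst h'; exact haS
            · rw [if_neg h'] at hl; simp [hS, hl.1, hl.2]
        have hcard : (Finset.univ.filter fun i => y' i ≠ 0 ∧ y' i ≠ 1).card < k := by
          have : ∃ e, e ∈ S ∧ (y' e = 0 ∨ y' e = 1) := by
            rcases hdrop with h | h
            · exact ⟨a, haS, Or.inr h⟩
            · exact ⟨b, hbS, Or.inl h⟩
          obtain ⟨e, heS, hye⟩ := this
          calc (Finset.univ.filter fun i => y' i ≠ 0 ∧ y' i ≠ 1).card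
              ≤ (S.erase e).card := Finset.card_le_card (hsub e hye)
            _ < S.card := Finset.card_erase_lt_of_mem heS
            _ = k := hk
        exact le_trans hval (IH _ hcard y' rfl hy'b hy'w hy'x)
      rcases le_total (p b * w a) (p a * w b) with h | h
      · exact move a b haS hbS hab h
      · exact move b a hbS haS (Ne.symm hab) h



/-- if x̃ is feasible (c⊤x̃ ≤ B) with F(x̃) ≤ (1+ε/2)·OPT_F and w_i ≤ C for all i,
then there is an optimal packing y for K(x̃), and K(x̃) ≤ (2+ε)·OPT_I. -/
theorem stmt15 (n : ℕ) (hn : 0 < n) (C B : ℝ) (hC : 0 ≤ C) (hB : 0 ≤ B)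
    (p w c : Fin n → ℝ) (hp : ∀ i, 0 ≤ p i) (hw : ∀ i, 0 ≤ w i) (hc : ∀ i, 0 ≤ c i)
    (hwC : ∀ i, w i ≤ C) (ε : ℝ) (hε : 0 < ε)
    (K F : (Fin n → ℝ) → ℝ)
    (hK : ∀ x, (∀ i, x i = 0 ∨ x i = 1) →
      IsGreatest {v : ℝ | ∃ y : Fin n → ℝ,
        (∀ i, y i = 0 ∨ y i = 1) ∧ (∑ i, w i * y i ≤ C) ∧
        (∀ i, y i ≤ 1 - x i) ∧ v = ∑ i, p i * y i} (K x))
    (hF : ∀ x, (∀ i, x i = 0 ∨ x i = 1) →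
      IsGreatest {v : ℝ | ∃ y : Fin n → ℝ,
        (∀ i, 0 ≤ y i ∧ y i ≤ 1) ∧ (∑ i, w i * y i ≤ C) ∧
        (∀ i, y i ≤ 1 - x i) ∧ v = ∑ i, p i * y i} (F x))
    (OPTI OPTF : ℝ)
    (hI : IsLeast {v : ℝ | ∃ x : Fin n → ℝ,
        (∀ i, x i = 0 ∨ x i = 1) ∧ (∑ i, c i * x i ≤ B) ∧ v = K x} OPTI)
    (hFo : IsLeast {v : ℝ | ∃ x : Fin n → ℝ,
        (∀ i, x i = 0 ∨ x i = 1) ∧ (∑ i, c i * x i ≤ B) ∧ v = F x} OPTF)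
    (xt : Fin n → ℝ) (hxt : ∀ i, xt i = 0 ∨ xt i = 1)
    (hfeas : ∑ i, c i * xt i ≤ B)
    (happrox : F xt ≤ (1 + ε / 2) * OPTF) :
    (∃ y : Fin n → ℝ,
      (∀ i, y i = 0 ∨ y i = 1) ∧ (∑ i, w i * y i ≤ C) ∧ (∀ i, y i ≤ 1 - xt i) ∧
      ∑ i, p i * y i = K xt) ∧
    K xt ≤ (2 + ε) * OPTI := by
  -- optimal packing for K x̃
  obtain ⟨yK, hyK1, hyK2, hyK3, hyKv⟩ := (hK xt hxt).1
  refine ⟨⟨yK, hyK1, hyK2, hyK3, hyKv.symm⟩, ?_⟩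
  -- K x̃ ≤ F x̃
  have hKF : K xt ≤ F xt := by
    have : K xt ∈ {v : ℝ | ∃ y : Fin n → ℝ,
        (∀ i, 0 ≤ y i ∧ y i ≤ 1) ∧ (∑ i, w i * y i ≤ C) ∧
        (∀ i, y i ≤ 1 - xt i) ∧ v = ∑ i, p i * y i} := by
      refine ⟨yK, fun i => ?_, hyK2, hyK3, hyKv⟩
      rcases hyK1 i with h | h <;> simp [h]
    exact (hF xt hxt).2 this
  -- optimal interdiction set for OPT_I
  obtain ⟨xs, hxs1, hxs2, hOPTI⟩ := hI.1
  -- OPT_F ≤ F xs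
  have hFoLe : OPTF ≤ F xs := hFo.2 ⟨xs, hxs1, hxs2, rfl⟩
  -- F xs ≤ 2 * K xs
  obtain ⟨yF, hyF1, hyF2, hyF3, hyFv⟩ := (hF xs hxs1).1
  have hF2K : F xs ≤ 2 * K xs := by
    rw [hyFv]
    exact fracBound hC p w xs hp hw hwC hxs1 (K xs)
      (fun z hz1 hz2 hz3 => (hK xs hxs1).2 ⟨z, hz1, hz2, hz3, rfl⟩)
      yF hyF1 hyF2 hyF3
  have hOPTF2I : OPTF ≤ 2 * OPTI := by rw [hOPTI]; linarith
  have hOPTF0 : 0 ≤ OPTF := by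
    obtain ⟨xf, hxf1, hxf2, hOF⟩ := hFo.1
    have h0 : (0:ℝ) ∈ {v : ℝ | ∃ y : Fin n → ℝ,
        (∀ i, 0 ≤ y i ∧ y i ≤ 1) ∧ (∑ i, w i * y i ≤ C) ∧
        (∀ i, y i ≤ 1 - xf i) ∧ v = ∑ i, p i * y i} := by
      refine ⟨fun _ => 0, by norm_num, by simpa, fun i => ?_, by simp⟩
      rcases hxf1 i with h | h <;> simp [h]
    have := (hF xf hxf1).2 h0
    linarith [hOF]
  have hstep : K xt ≤ (1 + ε / 2) * OPTF := le_trans hKF happrox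
  have : (1 + ε / 2) * OPTF ≤ (1 + ε / 2) * (2 * OPTI) := by
    apply mul_le_mul_of_nonneg_left hOPTF2I
    linarith
  calc K xt ≤ (1 + ε / 2) * (2 * OPTI) := le_trans hstep this
    _ = (2 + ε) * OPTI := by ring
end
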